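/- Let α be a countable type and let f be any function from finite subsets of α to ℝ. Then there exist functions Φ : α → ℝ and ρ : ℝ → ℝ such that for every finite set X ⊆ α, f(X) = ρ(∑_{x ∈ X} Φ(x)). -/
import Mathlib

theorem deep_sets_decomposition (α : Type*) [Countable α] (f : Finset α → ℝ) :
    ∃ (Φ : α → ℝ) (ρ : ℝ → ℝ), ∀ X : Finset α,
      f X = ρ (∑ x ∈ X, Φ x) := by
  obtain ⟨e, he⟩ := Countable.exists_injective_nat α
  set g : Finset α → ℕ := fun X => ∑ x ∈ X, 2 ^ (e x) with hg
  have hginj : Function.Injective g := by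
    intro X Y h
    have h' : ∑ i ∈ X.image e, 2 ^ i = ∑ i ∈ Y.image e, 2 ^ i := by
      rw [Finset.sum_image (fun a _ b _ hab => he hab),
        Finset.sum_image (fun a _ b _ hab => he hab)]
      exact h
    have := Finset.geomSum_injective le_rfl h'
    exact Finset.image_injective he this
  refine ⟨fun x => (2 : ℝ) ^ (e x), fun r => f (Function.invFun g ⌊r⌋₊), fun X => ?_⟩
  have hsum : (∑ x ∈ X, (2 : ℝ) ^ (e x)) = (g X : ℝ) := by
    push_cast [hg]; rfl
  simp only [hsum]
  rw [Nat.floor_natCast, Function.leftInverse_invFun hginj X]
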